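/- Let (A, m) be a complete local ring with residue field K and let f(t) ∈ A[[t]] be a power series whose reduction f₀(t) ∈ K[[t]] modulo m has t-adic order d < ∞. Then there exists a Weierstrass polynomial q(t) ∈ A[t] of degree d and a unit u(t) ∈ A[[t]]^× such that f(t) = u(t)·q(t). -/

import Mathlib

open IsLocalRing Polynomial

/-- A Weierstrass polynomial of degree `d` over a local ring: a monic polynomial of
degree `d` all of whose non-leading coefficients lie in the maximal ideal. -/
def IsWeierstrassPolynomial {A : Type*} [CommRing A] [IsLocalRing A]
    (q : Polynomial A) (d : ℕ) : Prop :=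
  q.Monic ∧ q.natDegree = d ∧ ∀ i < d, q.coeff i ∈ maximalIdeal A

section Aux

variable {A : Type*} [CommRing A]

/-- shift: drop the first `d` coefficients of a power series. -/
noncomputable def pshift (d : ℕ) (h : PowerSeries A) : PowerSeries A :=
  PowerSeries.mk fun n => PowerSeries.coeff (n + d) h

@[simp] lemma coeff_pshift (d n : ℕ) (h : PowerSeries A) :
    PowerSeries.coeff n (pshift d h) = PowerSeries.coeff (n + d) h :=
  PowerSeries.coeff_mk _ _

lemma pshift_sub (d : ℕ) (a b : PowerSeries A) :
    pshift d (a - b) = pshift d a - pshift d b := by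
  ext n; simp

lemma pshift_X_pow_mul (d : ℕ) (s : PowerSeries A) :
    pshift d ((PowerSeries.X : PowerSeries A) ^ d * s) = s := by
  ext n; simp [PowerSeries.coeff_X_pow_mul]

lemma trunc_add_X_pow_mul_pshift (d : ℕ) (h : PowerSeries A) :
    ((PowerSeries.trunc d h : Polynomial A) : PowerSeries A)
      + (PowerSeries.X : PowerSeries A) ^ d * pshift d h = h := by
  ext n
  rw [map_add, Polynomial.coeff_coe, PowerSeries.coeff_trunc]
  rcases lt_or_ge n d with hn | hn
  · rw [if_pos hn, PowerSeries.coeff_X_pow_mul', if_neg (by omega), add_zero]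
  · rw [if_neg (by omega), PowerSeries.coeff_X_pow_mul', if_pos hn, coeff_pshift, zero_add,
      Nat.sub_add_cancel hn]

lemma coeff_mul_mem_of_right {I : Ideal A} (a b : PowerSeries A)
    (hb : ∀ i, PowerSeries.coeff i b ∈ I) (n : ℕ) : PowerSeries.coeff n (a * b) ∈ I := by
  rw [PowerSeries.coeff_mul]
  exact Ideal.sum_mem _ fun p _ => Ideal.mul_mem_left _ _ (hb p.2)

lemma coeff_mul_mem_mul {I J : Ideal A} (a b : PowerSeries A)
    (ha : ∀ i, PowerSeries.coeff i a ∈ I) (hb : ∀ i, PowerSeries.coeff i b ∈ J) (n : ℕ) :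
    PowerSeries.coeff n (a * b) ∈ I * J := by
  rw [PowerSeries.coeff_mul]
  exact Ideal.sum_mem _ fun p _ => Ideal.mul_mem_mul (ha p.1) (hb p.2)

lemma smod_top_iff {I : Ideal A} {a b : A} :
    a ≡ b [SMOD (I • ⊤ : Submodule A A)] ↔ a - b ∈ I := by
  rw [SModEq.sub_mem, smul_eq_mul, Ideal.mul_top]

/-- the contraction operator used in Weierstrass division -/
noncomputable def wop (d : ℕ) (V P q : PowerSeries A) : PowerSeries A :=
  V * pshift d (q * P)

lemma wop_def (d : ℕ) (V P q : PowerSeries A) : wop d V P q = V * pshift d (q * P) := rfl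

lemma wop_sub (d : ℕ) (V P a b : PowerSeries A) :
    wop d V P (a - b) = wop d V P a - wop d V P b := by
  rw [wop_def, wop_def, wop_def, sub_mul, pshift_sub, mul_sub]

end Aux

/-- Weierstrass preparation: if `(A, m)` is a complete local ring with residue field `K`
and `f ∈ A[[t]]` has reduction `f₀ ∈ K[[t]]` of `t`-adic order `d < ∞` (that is, the
coefficients of `f₀` below degree `d` vanish and the `d`-th one does not), then
`f = u·q` for a Weierstrass polynomial `q` of degree `d` and a unit `u ∈ A[[t]]ˣ`. -/
theorem weierstrass_preparation {A : Type*} [CommRing A] [IsLocalRing A]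
    [IsAdicComplete (maximalIdeal A) A]
    (f : PowerSeries A) (d : ℕ)
    (h0 : ∀ i < d, PowerSeries.coeff i (PowerSeries.map (residue A) f) = 0)
    (hd : PowerSeries.coeff d (PowerSeries.map (residue A) f) ≠ 0) :
    ∃ (q : Polynomial A) (u : PowerSeries A), IsWeierstrassPolynomial q d ∧
      IsUnit u ∧ f = u * (q : PowerSeries A) := by
  classical
  set m := maximalIdeal A with hm
  have hm0 : ∀ i < d, PowerSeries.coeff i f ∈ m := by
    intro i hi
    have := h0 i hi
    rw [PowerSeries.coeff_map] at this
    exact (Ideal.Quotient.eq_zero_iff_mem).mp this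
  have hfd : IsUnit (PowerSeries.coeff d f) := by
    rw [PowerSeries.coeff_map] at hd
    exact notMem_maximalIdeal.mp fun hmem => hd (Ideal.Quotient.eq_zero_iff_mem.mpr hmem)
  -- U and its inverse
  set U : PowerSeries A := pshift d f with hU
  have hUunit : IsUnit U := by
    rw [PowerSeries.isUnit_iff_constantCoeff]
    simpa [hU, ← PowerSeries.coeff_zero_eq_constantCoeff] using hfd
  obtain ⟨w, hw⟩ := hUunit
  set V : PowerSeries A := ↑w⁻¹ with hV
  have hUV : U * V = 1 := by rw [← hw, hV, Units.mul_inv]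
  -- P
  set P : PowerSeries A := ((PowerSeries.trunc d f : Polynomial A) : PowerSeries A) with hPdef
  have hP : ∀ i, PowerSeries.coeff i P ∈ m := by
    intro i
    rw [hPdef, Polynomial.coeff_coe, PowerSeries.coeff_trunc]
    split
    · exact hm0 i ‹_›
    · exact zero_mem _
  have hfPU : f = P + PowerSeries.X ^ d * U := (trunc_add_X_pow_mul_pshift d f).symm
  -- contraction operator
  have hMmem : ∀ (I : Ideal A) (q : PowerSeries A), (∀ i, PowerSeries.coeff i q ∈ I) →
      ∀ i, PowerSeries.coeff i (wop d V P q) ∈ I * m := by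
    intro I q hq i
    rw [wop_def]
    refine coeff_mul_mem_of_right (I := I * m) V _ (fun j => ?_) i
    rw [coeff_pshift]
    exact coeff_mul_mem_mul q P hq hP _
  -- the approximating sequence
  set seq : ℕ → PowerSeries A := fun N => Nat.rec 0 (fun _ q => V - wop d V P q) N with hseq
  have hseqS : ∀ N, seq (N + 1) = V - wop d V P (seq N) := fun _ => rfl
  have key : ∀ N i, PowerSeries.coeff i (seq (N + 1) - seq N) ∈ m ^ N := by
    intro N
    induction N with
    | zero => intro i; simp [Ideal.one_eq_top]
    | succ N ih =>
      intro i
      have heq : seq (N + 1 + 1) - seq (N + 1) = wop d V P (seq N - seq (N + 1)) := by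
        rw [wop_sub, hseqS (N + 1), hseqS N]
        ring
      rw [heq, pow_succ]
      refine hMmem _ _ (fun j => ?_) i
      have h2 : seq N - seq (N + 1) = -(seq (N + 1) - seq N) := by ring
      rw [h2, map_neg]
      exact neg_mem (ih j)
  have cauchy : ∀ N N', N ≤ N' → ∀ i, PowerSeries.coeff i (seq N' - seq N) ∈ m ^ N := by
    intro N N' h
    induction N' with
    | zero =>
      intro i
      interval_cases N
      simp
    | succ N' ih =>
      intro i
      rcases Nat.lt_or_ge N (N' + 1) with h1 | h1
      · have hle : N ≤ N' := by omega
        have hsplit : seq (N' + 1) - seq N = (seq (N' + 1) - seq N') + (seq N' - seq N) := by ring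
        rw [hsplit, map_add]
        exact add_mem (Ideal.pow_le_pow_right hle (key N' i)) (ih hle i)
      · have : N = N' + 1 := by omega
        subst this
        simp
  -- the limit q
  have hex : ∀ i : ℕ, ∃ L : A, ∀ N : ℕ, PowerSeries.coeff i (seq N) ≡ L
      [SMOD ((m ^ N • ⊤ : Submodule A A))] := by
    intro i
    refine IsPrecomplete.prec (IsAdicComplete.toIsPrecomplete) ?_
    intro a b hab
    rw [smod_top_iff]
    have h := cauchy a b hab i
    have heq : PowerSeries.coeff i (seq a) - PowerSeries.coeff i (seq b)
        = -(PowerSeries.coeff i (seq b - seq a)) := by rw [map_sub]; ring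
    rw [heq]
    exact neg_mem h
  choose L hL using hex
  set q : PowerSeries A := PowerSeries.mk L with hqdef
  have hq : ∀ N i, PowerSeries.coeff i (q - seq N) ∈ m ^ N := by
    intro N i
    have h := (smod_top_iff).mp (hL i N)
    have heq : PowerSeries.coeff i (q - seq N)
        = -(PowerSeries.coeff i (seq N) - L i) := by
      rw [map_sub, hqdef, PowerSeries.coeff_mk]; ring
    rw [heq]
    exact neg_mem h
  -- fixed point equation
  have hfix : q = V - wop d V P q := by
    have hcoeff : ∀ i N, PowerSeries.coeff i (q - (V - wop d V P q)) ∈ m ^ N := by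
      intro i N
      have hdec : q - (V - wop d V P q) = (q - seq (N + 1)) + wop d V P (q - seq N) := by
        rw [hseqS N, wop_sub]; ring
      rw [hdec, map_add]
      refine add_mem (Ideal.pow_le_pow_right (by omega) (hq (N + 1) i)) ?_
      have h := hMmem (m ^ N) (q - seq N) (hq N) i
      rw [← pow_succ] at h
      exact Ideal.pow_le_pow_right (by omega) h
    ext i
    rw [map_sub]
    have h := IsHausdorff.haus (IsAdicComplete.toIsHausdorff (I := m))
      (PowerSeries.coeff i (q - (V - wop d V P q))) (fun N => by
        rw [SModEq.zero, smul_eq_mul, Ideal.mul_top]; exact hcoeff i N)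
    rw [map_sub] at h
    exact sub_eq_zero.mp h
  -- derive the division identity
  have hUq : U * q = 1 - pshift d (q * P) := by
    have h1 : U * q = U * (V - wop d V P q) := by conv_lhs => rw [hfix]
    rw [h1, wop_def, mul_sub, hUV, ← mul_assoc, hUV, one_mul]
  have hshift0 : pshift d ((PowerSeries.X : PowerSeries A) ^ d - q * f) = 0 := by
    have heq : (PowerSeries.X : PowerSeries A) ^ d - q * f
        = PowerSeries.X ^ d * (1 - q * U) - q * P := by rw [hfPU]; ring
    rw [heq, pshift_sub, pshift_X_pow_mul, mul_comm q U, hUq]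
    ext n
    simp
  set r : Polynomial A := PowerSeries.trunc d ((PowerSeries.X : PowerSeries A) ^ d - q * f)
    with hrdef
  have hr : ((r : Polynomial A) : PowerSeries A)
      = (PowerSeries.X : PowerSeries A) ^ d - q * f := by
    have h := trunc_add_X_pow_mul_pshift d ((PowerSeries.X : PowerSeries A) ^ d - q * f)
    rw [hshift0, mul_zero, add_zero] at h
    rw [hrdef, h]
  have hrdeg : r.degree < (d : ℕ) := PowerSeries.degree_trunc_lt _ _
  -- the Weierstrass polynomial
  set Q : Polynomial A := Polynomial.X ^ d - r with hQdef
  have hQcoe : ((Q : Polynomial A) : PowerSeries A) = q * f := by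
    rw [hQdef]
    push_cast [Polynomial.coe_sub, Polynomial.coe_pow, Polynomial.coe_X]
    rw [hr]
    ring
  have hQmonic : Q.Monic := Polynomial.monic_X_pow_sub hrdeg
  have hQdeg : Q.natDegree = d := by
    have hdeg : Q.degree = (d : ℕ) := by
      rw [hQdef,
        Polynomial.degree_sub_eq_left_of_degree_lt (by rwa [Polynomial.degree_X_pow]),
        Polynomial.degree_X_pow]
    exact Polynomial.natDegree_eq_of_degree_eq_some hdeg
  have hQcoeff : ∀ i < d, Q.coeff i ∈ m := by
    intro i hi
    have h2 : r.coeff i = PowerSeries.coeff i ((PowerSeries.X : PowerSeries A) ^ d - q * f) := by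
      rw [← Polynomial.coeff_coe, hr]
    have h3 : PowerSeries.coeff i (q * f) ∈ m := by
      rw [PowerSeries.coeff_mul]
      refine Ideal.sum_mem _ fun p hp => Ideal.mul_mem_left _ _ (hm0 p.2 ?_)
      have := Finset.HasAntidiagonal.mem_antidiagonal.mp hp
      omega
    have h1 : Q.coeff i = PowerSeries.coeff i (q * f) := by
      rw [hQdef, Polynomial.coeff_sub, Polynomial.coeff_X_pow, if_neg (by omega), zero_sub, h2,
        map_sub, PowerSeries.coeff_X_pow, if_neg (by omega), zero_sub, neg_neg]
    rw [h1]
    exact h3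
  -- q is a unit
  have hqunit : IsUnit q := by
    rw [PowerSeries.isUnit_iff_constantCoeff]
    have hV0 : IsUnit (PowerSeries.constantCoeff V) :=
      PowerSeries.isUnit_constantCoeff V (w⁻¹).isUnit
    have hMq0 : PowerSeries.constantCoeff (wop d V P q) ∈ m := by
      have h := hMmem ⊤ q (fun _ => trivial) 0
      rw [Ideal.top_mul] at h
      rw [← PowerSeries.coeff_zero_eq_constantCoeff]
      exact h
    have hc : PowerSeries.constantCoeff q
        = PowerSeries.constantCoeff V - PowerSeries.constantCoeff (wop d V P q) := by
      conv_lhs => rw [hfix]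
      rw [map_sub]
    rw [hc]
    refine notMem_maximalIdeal.mp fun hmem => ?_
    have hVm : PowerSeries.constantCoeff V ∈ m := by
      have := add_mem hmem hMq0
      simpa only [sub_add_cancel] using this
    exact (notMem_maximalIdeal.mpr hV0) hVm
  obtain ⟨z, hz⟩ := hqunit
  refine ⟨Q, ↑z⁻¹, ⟨hQmonic, hQdeg, hQcoeff⟩, (z⁻¹).isUnit, ?_⟩
  have hzf : (↑z : PowerSeries A) * f = (Q : PowerSeries A) := by rw [hz, ← hQcoe]
  calc f = ↑z⁻¹ * (↑z * f) := by rw [← mul_assoc, Units.inv_mul, one_mul]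
  _ = ↑z⁻¹ * (Q : PowerSeries A) := by rw [hzf]
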